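/- Let t, z be integers with 2 ≤ t < z and let K↔_{t,z} be the complete bipartite digraph with parts of sizes t and z. Then λ_k^c(K↔_{t,z}) = t for every integer k with 2 ≤ k ≤ t, and λ_k^c(K↔_{t,z}) = 0 for every integer k with t + 1 ≤ k ≤ t + z. -/

import Mathlib

/-- A directed cycle in a digraph `D`, represented by its (nonempty, duplicate-free)
list of vertices in cyclic order; consecutive vertices (cyclically) are joined by arcs. -/
def IsDiCycle {V : Type*} (D : Digraph V) (l : List V) : Prop :=
  l.Nodup ∧ 2 ≤ l.length ∧ ∀ p ∈ l.zip (l.rotate 1), D.Adj p.1 p.2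

/-- The set of arcs traversed by a cycle given by the vertex list `l`. -/
def cycArcs {V : Type*} (l : List V) : Set (V × V) :=
  {p | p ∈ l.zip (l.rotate 1)}

/-- An `S`-cycle: a directed cycle whose vertex set contains `S`. -/
def IsSCycle {V : Type*} (D : Digraph V) (S : Set V) (l : List V) : Prop :=
  IsDiCycle D l ∧ ∀ s ∈ S, s ∈ l

/-- `D` contains `m` pairwise arc-disjoint `S`-cycles. -/
def ArcDisjointSCycles {V : Type*} (D : Digraph V) (S : Set V) (m : ℕ) : Prop :=
  ∃ f : Fin m → List V, (∀ i, IsSCycle D S (f i)) ∧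
    ∀ i j, i ≠ j → Disjoint (cycArcs (f i)) (cycArcs (f j))

/-- `λ_S^c(D)`: the maximum number of pairwise arc-disjoint `S`-cycles in `D`. -/
noncomputable def lambdaS {V : Type*} (D : Digraph V) (S : Set V) : ℕ :=
  sSup {m | ArcDisjointSCycles D S m}

/-- `λ_k^c(D)`: the directed cycle `k`-arc-connectivity of `D`, the minimum of
`λ_S^c(D)` over all vertex subsets `S` of size `k`. -/
noncomputable def lambdaK {V : Type*} [Fintype V] (D : Digraph V) (k : ℕ) : ℕ :=
  sInf {m | ∃ S : Finset V, S.card = k ∧ lambdaS D ↑S = m}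

/-- The complete bipartite digraph with parts `Fin t` and `Fin z`: there is an arc
between any two vertices lying in distinct parts. -/
def completeBipartiteDigraph (t z : ℕ) : Digraph (Fin t ⊕ Fin z) :=
  ⟨fun u v => u.isLeft ≠ v.isLeft⟩

namespace CBDAux

lemma mem_cycArcs_iff {V : Type*} {l : List V} {p : V × V} :
    p ∈ cycArcs l ↔ ∃ i : ℕ, ∃ h : i < l.length,
      p = (l[i], l[(i+1) % l.length]'(Nat.mod_lt _ (by omega))) := by
  have hlen : (l.zip (l.rotate 1)).length = l.length := by
    simp [List.length_zip, List.length_rotate]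
  constructor
  · rintro hp
    obtain ⟨i, h, hget⟩ := List.mem_iff_getElem.mp hp
    rw [hlen] at h
    refine ⟨i, h, ?_⟩
    rw [List.getElem_zip] at hget
    rw [List.getElem_rotate] at hget
    exact hget.symm
  · rintro ⟨i, h, hp⟩
    refine List.mem_iff_getElem.mpr ⟨i, by rw [hlen]; exact h, ?_⟩
    rw [List.getElem_zip, List.getElem_rotate, ← hp]

lemma succ_mod_inj {n p q : ℕ} (hp : p < n) (hq : q < n)
    (h : (p+1) % n = (q+1) % n) : p = q := by
  rcases Nat.lt_or_ge (p+1) n with h1 | h1 <;> rcases Nat.lt_or_ge (q+1) n with h2 | h2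
  · rw [Nat.mod_eq_of_lt h1, Nat.mod_eq_of_lt h2] at h; omega
  · have hq1 : q + 1 = n := by omega
    rw [Nat.mod_eq_of_lt h1, hq1, Nat.mod_self] at h; omega
  · have hp1 : p + 1 = n := by omega
    rw [Nat.mod_eq_of_lt h2, hp1, Nat.mod_self] at h; omega
  · omega

/-- Successor map: if `v ∈ S`, each family of `m` arc-disjoint `S`-cycles gives
an injective map `Fin m → V` picking out-neighbors of `v`. -/
lemma exists_succ_map {V : Type*} {D : Digraph V} {S : Set V} {m : ℕ} {v : V}
    (hv : v ∈ S) (h : ArcDisjointSCycles D S m) :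
    ∃ w : Fin m → V, Function.Injective w ∧ ∀ i, D.Adj v (w i) := by
  obtain ⟨f, hf, hdisj⟩ := h
  have key : ∀ i : Fin m, ∃ wi : V, D.Adj v wi ∧ (v, wi) ∈ cycArcs (f i) := by
    intro i
    obtain ⟨p, hp, hlp⟩ := List.mem_iff_getElem.mp ((hf i).2 v hv)
    refine ⟨(f i)[(p+1) % (f i).length]'(Nat.mod_lt _ (by omega)), ?_, ?_⟩
    · have harc : ((f i)[p], (f i)[(p+1) % (f i).length]'(Nat.mod_lt _ (by omega)))
          ∈ cycArcs (f i) := mem_cycArcs_iff.mpr ⟨p, hp, rfl⟩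
      have := (hf i).1.2.2 _ harc
      rwa [hlp] at this
    · refine mem_cycArcs_iff.mpr ⟨p, hp, ?_⟩
      rw [hlp]
  choose w hw1 hw2 using key
  refine ⟨w, ?_, hw1⟩
  intro i j hij
  by_contra hne
  have hmem : (v, w i) ∈ cycArcs (f j) := by rw [hij]; exact hw2 j
  exact (Set.disjoint_left.mp (hdisj i j hne) (hw2 i)) hmem

variable {t z : ℕ}

/-- Bound: any family of arc-disjoint `S`-cycles (with `S` nonempty) has size at
most the number of vertices. -/
lemma bddAbove_family {V : Type*} [Fintype V] {D : Digraph V} {S : Set V} {v : V}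
    (hv : v ∈ S) : BddAbove {m | ArcDisjointSCycles D S m} := by
  refine ⟨Fintype.card V, fun m hm => ?_⟩
  obtain ⟨w, hwinj, -⟩ := exists_succ_map hv hm
  simpa using Fintype.card_le_of_injective w hwinj

lemma zero_mem_family {V : Type*} {D : Digraph V} {S : Set V} :
    (0 : ℕ) ∈ {m | ArcDisjointSCycles D S m} :=
  ⟨fun i => i.elim0, fun i => i.elim0, fun i => i.elim0⟩

/-- Upper bound: if `S` contains a right vertex, at most `t` arc-disjoint `S`-cycles. -/
lemma family_le_t {S : Set (Fin t ⊕ Fin z)} {y0 : Fin z} (hy0 : Sum.inr y0 ∈ S)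
    {m : ℕ} (hm : ArcDisjointSCycles (completeBipartiteDigraph t z) S m) : m ≤ t := by
  obtain ⟨w, hwinj, hadj⟩ := exists_succ_map hy0 hm
  have hleft : ∀ i, ∃ x : Fin t, w i = Sum.inl x := by
    intro i
    have := hadj i
    simp only [completeBipartiteDigraph, Digraph.Adj] at this
    refine Sum.isLeft_iff.mp ?_
    simp only [Sum.isLeft_inr] at this
    cases hwl : (w i).isLeft
    · exact absurd hwl.symm this
    · rfl
  choose x hx using hleft
  have hxinj : Function.Injective x := by
    intro i j hij
    apply hwinj
    rw [hx i, hx j, hij]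
  simpa using Fintype.card_le_of_injective x hxinj

/-- No `S`-cycle exists when `S` contains more than `t` right vertices. -/
lemma no_SCycle {S : Set (Fin t ⊕ Fin z)} {T : Finset (Fin z)}
    (hT : t + 1 ≤ T.card) (hTS : ∀ y ∈ T, Sum.inr y ∈ S) {l : List (Fin t ⊕ Fin z)} :
    ¬ IsSCycle (completeBipartiteDigraph t z) S l := by
  rintro ⟨⟨hnd, hlen, hadj⟩, hmem⟩
  have hidx : ∀ y : T, ∃ p : ℕ, ∃ hp : p < l.length, l[p] = Sum.inr y.1 := by
    intro y
    exact List.mem_iff_getElem.mp (hmem _ (hTS y.1 y.2))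
  choose p hp hlp using hidx
  have hsucc : ∀ y : T, ∃ x : Fin t,
      l[(p y + 1) % l.length]'(Nat.mod_lt _ (by omega)) = Sum.inl x := by
    intro y
    have harc : (l[p y]'(hp y), l[(p y + 1) % l.length]'(Nat.mod_lt _ (by omega)))
        ∈ cycArcs l := mem_cycArcs_iff.mpr ⟨p y, hp y, rfl⟩
    have hAdj := hadj _ harc
    simp only [completeBipartiteDigraph, Digraph.Adj, hlp y, Sum.isLeft_inr] at hAdj
    refine Sum.isLeft_iff.mp ?_
    cases hwl : (l[(p y + 1) % l.length]'(Nat.mod_lt _ (by omega))).isLeft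
    · exact absurd hwl.symm hAdj
    · rfl
  choose x hx using hsucc
  have hxinj : Function.Injective x := by
    intro y y' hxy
    have hpne : p y = p y' := by
      apply succ_mod_inj (hp y) (hp y')
      apply (hnd.getElem_inj_iff).mp
      rw [hx y, hx y', hxy]
    have : l[p y]'(hp y) = l[p y']'(hp y') := by
      apply (hnd.getElem_inj_iff).mpr hpne
    rw [hlp y, hlp y'] at this
    exact Subtype.ext (Sum.inr_injective this)
  have hcard : T.card ≤ t := by
    have := Fintype.card_le_of_injective x hxinj
    simpa using this
  omega

/-- The standard cycle family: `cycFun g j` lists `g 0, j, g 1, 1+j, …` interleaved. -/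
def cycFun (t z : ℕ) [NeZero t] (g : Fin t → Fin z) (j : Fin t) (m : Fin (2*t)) :
    Fin t ⊕ Fin z :=
  if m.val % 2 = 0 then Sum.inr (g ⟨m.val / 2, by have := m.isLt; omega⟩)
  else Sum.inl ((⟨m.val / 2, by have := m.isLt; omega⟩ : Fin t) + j)


lemma mem_cycArcs_ofFn {n : ℕ} (hn : 0 < n) {α : Type*} (f : Fin n → α) {p : α × α} :
    p ∈ cycArcs (List.ofFn f) ↔
      ∃ i : Fin n, p = (f i, f ⟨(i.val + 1) % n, Nat.mod_lt _ hn⟩) := by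
  rw [mem_cycArcs_iff]
  constructor
  · rintro ⟨i, h, hp⟩
    have hlen : (List.ofFn f).length = n := List.length_ofFn
    rw [hlen] at h
    refine ⟨⟨i, h⟩, ?_⟩
    rw [hp, List.getElem_ofFn, List.getElem_ofFn]
    congr 1 <;> simp [hlen]
  · rintro ⟨i, hp⟩
    have hlen : (List.ofFn f).length = n := List.length_ofFn
    refine ⟨i.val, by rw [hlen]; exact i.isLt, ?_⟩
    rw [hp, List.getElem_ofFn, List.getElem_ofFn]
    congr 1 <;> simp [hlen]

lemma cycFun_inj [NeZero t] {g : Fin t → Fin z} (hg : Function.Injective g) (j : Fin t) :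
    Function.Injective (cycFun t z g j) := by
  intro m m' h
  have hm := m.isLt; have hm' := m'.isLt
  unfold cycFun at h
  by_cases h1 : m.val % 2 = 0 <;> by_cases h2 : m'.val % 2 = 0
  · rw [if_pos h1, if_pos h2] at h
    have hv : m.val / 2 = m'.val / 2 :=
      congrArg Fin.val (hg (Sum.inr_injective h))
    exact Fin.ext (by omega)
  · rw [if_pos h1, if_neg h2] at h; exact absurd h (by simp)
  · rw [if_neg h1, if_pos h2] at h; exact absurd h (by simp)
  · rw [if_neg h1, if_neg h2] at h
    have hv : m.val / 2 = m'.val / 2 :=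
      congrArg Fin.val (add_right_cancel (Sum.inl_injective h))
    exact Fin.ext (by omega)

lemma isSCycle_cyc [NeZero t] (ht : 2 ≤ t) {g : Fin t → Fin z} (hg : Function.Injective g)
    {S : Set (Fin t ⊕ Fin z)} (hS : ∀ y, Sum.inr y ∈ S → y ∈ Set.range g) (j : Fin t) :
    IsSCycle (completeBipartiteDigraph t z) S (List.ofFn (cycFun t z g j)) := by
  have h2t : 0 < 2 * t := by omega
  refine ⟨⟨List.nodup_ofFn.mpr (cycFun_inj hg j), ?_, ?_⟩, ?_⟩
  · rw [List.length_ofFn]; omega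
  · intro p hp
    rw [show (p ∈ (List.ofFn (cycFun t z g j)).zip ((List.ofFn (cycFun t z g j)).rotate 1))
        = (p ∈ cycArcs (List.ofFn (cycFun t z g j))) from rfl] at hp
    obtain ⟨i, hpi⟩ := (mem_cycArcs_ofFn h2t _).mp hp
    subst hpi
    show (cycFun t z g j i).isLeft ≠ (cycFun t z g j ⟨(i.val + 1) % (2*t), _⟩).isLeft
    have hi := i.isLt
    rcases Nat.lt_or_ge (i.val + 1) (2*t) with h1 | h1
    · have hmod : (i.val + 1) % (2*t) = i.val + 1 := Nat.mod_eq_of_lt h1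
      by_cases hpar : i.val % 2 = 0
      · have hpar1 : ¬ (i.val + 1) % 2 = 0 := by omega
        simp [cycFun, hmod, hpar, hpar1]
      · have hpar1 : (i.val + 1) % 2 = 0 := by omega
        simp [cycFun, hmod, hpar, hpar1]
    · have heq : i.val + 1 = 2*t := by omega
      have hmod : (i.val + 1) % (2*t) = 0 := by rw [heq]; exact Nat.mod_self _
      have hpar : ¬ (i.val % 2 = 0) := by omega
      simp [cycFun, hmod, hpar]
  · intro s hs
    rw [List.mem_ofFn]
    cases s with
    | inl x =>
      refine ⟨⟨2 * (x - j).val + 1, by have := (x - j).isLt; omega⟩, ?_⟩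
      have hpar : (2 * (x - j).val + 1) % 2 = 1 := by omega
      simp only [cycFun, hpar]
      norm_num
      have : ((2 * (x - j).val + 1) / 2) = (x - j).val := by omega
      congr 1
      rw [show (⟨(2 * (x - j).val + 1) / 2, by have := (x-j).isLt; omega⟩ : Fin t)
        = x - j from Fin.ext this]
      exact sub_add_cancel x j
    | inr y =>
      obtain ⟨i0, hi0⟩ := hS y hs
      refine ⟨⟨2 * i0.val, by have := i0.isLt; omega⟩, ?_⟩
      have hpar : (2 * i0.val) % 2 = 0 := by omega
      simp only [cycFun, hpar, if_true]
      norm_num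
      exact hi0

lemma disjoint_cyc [NeZero t] (ht : 2 ≤ t) {g : Fin t → Fin z} (hg : Function.Injective g)
    {j j' : Fin t} (hjj' : j ≠ j') :
    Disjoint (cycArcs (List.ofFn (cycFun t z g j)))
      (cycArcs (List.ofFn (cycFun t z g j'))) := by
  have h2t : 0 < 2 * t := by omega
  rw [Set.disjoint_left]
  intro p hp hp'
  obtain ⟨i, hpi⟩ := (mem_cycArcs_ofFn h2t _).mp hp
  obtain ⟨i', hpi'⟩ := (mem_cycArcs_ofFn h2t _).mp hp'
  rw [hpi] at hpi'
  have hfst : cycFun t z g j i = cycFun t z g j' i' := congrArg Prod.fst hpi'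
  have hsnd : cycFun t z g j ⟨(i.val + 1) % (2*t), Nat.mod_lt _ h2t⟩
      = cycFun t z g j' ⟨(i'.val + 1) % (2*t), Nat.mod_lt _ h2t⟩ :=
    congrArg Prod.snd hpi'
  have hi := i.isLt
  have hi' := i'.isLt
  apply hjj'
  by_cases hpar : i.val % 2 = 0
  · -- first components are inr, so i' is even and i = i'
    have hpar' : i'.val % 2 = 0 := by
      by_contra hodd
      simp [cycFun, hpar, hodd] at hfst
    have hii' : i.val = i'.val := by
      simp only [cycFun, hpar, hpar', if_true, Sum.inr.injEq] at hfst
      have := hg hfst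
      have hv : i.val / 2 = i'.val / 2 := congrArg Fin.val this
      omega
    -- successors: indices i+1 < 2t, odd, give inl (⟨(i+1)/2⟩ + j)
    obtain rfl : i = i' := Fin.ext hii'
    have h1 : i.val + 1 < 2*t := by omega
    have hmod : (i.val + 1) % (2*t) = i.val + 1 := Nat.mod_eq_of_lt h1
    have hparS : ¬ ((i.val + 1) % (2*t)) % 2 = 0 := by rw [hmod]; omega
    simp only [cycFun, hparS, if_neg, if_false, Sum.inl.injEq] at hsnd
    exact add_left_cancel hsnd
  · -- first components are inl
    have hpar' : ¬ i'.val % 2 = 0 := by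
      by_contra heven
      simp [cycFun, hpar, heven] at hfst
    -- successors are inr
    have hparS : ((i.val + 1) % (2*t)) % 2 = 0 := by
      rcases Nat.lt_or_ge (i.val + 1) (2*t) with h1 | h1
      · rw [Nat.mod_eq_of_lt h1]; omega
      · have : i.val + 1 = 2*t := by omega
        rw [this, Nat.mod_self]
    have hparS' : ((i'.val + 1) % (2*t)) % 2 = 0 := by
      rcases Nat.lt_or_ge (i'.val + 1) (2*t) with h1 | h1
      · rw [Nat.mod_eq_of_lt h1]; omega
      · have : i'.val + 1 = 2*t := by omega
        rw [this, Nat.mod_self]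
    have hii' : i.val = i'.val := by
      simp only [cycFun, hparS, hparS', if_true, Sum.inr.injEq] at hsnd
      have := hg hsnd
      have hv : ((i.val + 1) % (2*t)) / 2 = ((i'.val + 1) % (2*t)) / 2 :=
        congrArg Fin.val this
      rcases Nat.lt_or_ge (i.val + 1) (2*t) with h1 | h1 <;>
        rcases Nat.lt_or_ge (i'.val + 1) (2*t) with h2 | h2
      · rw [Nat.mod_eq_of_lt h1, Nat.mod_eq_of_lt h2] at hv; omega
      · have he2 : i'.val + 1 = 2*t := by omega
        rw [Nat.mod_eq_of_lt h1, he2, Nat.mod_self] at hv; omega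
      · have he1 : i.val + 1 = 2*t := by omega
        rw [Nat.mod_eq_of_lt h2, he1, Nat.mod_self] at hv; omega
      · omega
    obtain rfl : i = i' := Fin.ext hii'
    simp only [cycFun, hpar, if_neg, if_false, Sum.inl.injEq] at hfst
    exact add_left_cancel hfst

/-- Lower bound construction: `t` arc-disjoint `S`-cycles whenever the right part of
`S` is contained in the range of an injective `g : Fin t → Fin z`. -/
lemma arcDisjoint_t (ht : 2 ≤ t) {g : Fin t → Fin z} (hg : Function.Injective g)
    {S : Set (Fin t ⊕ Fin z)} (hS : ∀ y, Sum.inr y ∈ S → y ∈ Set.range g) :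
    ArcDisjointSCycles (completeBipartiteDigraph t z) S t := by
  haveI : NeZero t := ⟨by omega⟩
  refine ⟨fun j => List.ofFn (cycFun t z g j), fun j => ?_, fun j j' hjj' => ?_⟩
  · exact isSCycle_cyc ht hg hS j
  · exact disjoint_cyc ht hg hjj'

lemma t_le_lambdaS (ht : 2 ≤ t) (htz : t < z) (S : Finset (Fin t ⊕ Fin z))
    (hcard : S.card ≤ t) (hne : S.Nonempty) :
    t ≤ lambdaS (completeBipartiteDigraph t z) ↑S := by
  classical
  set B : Finset (Fin z) := Finset.univ.filter (fun y => Sum.inr y ∈ S) with hB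
  have hBcard : B.card ≤ S.card := by
    apply Finset.card_le_card_of_injOn (fun y => Sum.inr y)
    · intro y hy
      simp only [hB, Finset.mem_filter, Finset.mem_univ, true_and] at hy
      simpa using hy
    · intro a _ b _ hab
      exact Sum.inr_injective hab
  have hBt : B.card ≤ t := le_trans hBcard hcard
  obtain ⟨T, hBT, hTcard⟩ := Finset.exists_superset_card_eq hBt
    (by simpa using le_of_lt htz)
  let e := T.equivFin
  let g : Fin t → Fin z := fun i => (e.symm (Fin.cast hTcard.symm i)).1
  have hginj : Function.Injective g := by
    intro a b hab
    have h2 := congrArg Fin.val (e.symm.injective (Subtype.ext hab))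
    exact Fin.ext (by simpa using h2)
  have hgS : ∀ y, Sum.inr y ∈ (↑S : Set (Fin t ⊕ Fin z)) → y ∈ Set.range g := by
    intro y hy
    have hyB : y ∈ B := by
      simp only [hB, Finset.mem_filter, Finset.mem_univ, true_and]
      exact hy
    have hyT : y ∈ T := hBT hyB
    refine ⟨Fin.cast hTcard (e ⟨y, hyT⟩), ?_⟩
    simp [g]
  have ht' : ArcDisjointSCycles (completeBipartiteDigraph t z) (↑S) t :=
    arcDisjoint_t ht hginj hgS
  obtain ⟨v, hv⟩ := hne
  exact le_csSup (bddAbove_family (Finset.mem_coe.mpr hv)) ht'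

lemma lambdaS_le_t {S : Set (Fin t ⊕ Fin z)} {y0 : Fin z} (hy0 : Sum.inr y0 ∈ S) :
    lambdaS (completeBipartiteDigraph t z) S ≤ t :=
  csSup_le ⟨0, zero_mem_family⟩ (fun _ hm => family_le_t hy0 hm)

lemma lambdaS_eq_zero {S : Set (Fin t ⊕ Fin z)} {T : Finset (Fin z)}
    (hT : t + 1 ≤ T.card) (hTS : ∀ y ∈ T, Sum.inr y ∈ S) :
    lambdaS (completeBipartiteDigraph t z) S = 0 := by
  unfold lambdaS
  have hset : {m | ArcDisjointSCycles (completeBipartiteDigraph t z) S m} = {0} := by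
    ext m
    simp only [Set.mem_setOf_eq, Set.mem_singleton_iff]
    constructor
    · rintro ⟨f, hf, -⟩
      by_contra hm
      exact no_SCycle hT hTS (hf ⟨0, Nat.pos_of_ne_zero hm⟩)
    · rintro rfl
      exact zero_mem_family
  rw [hset, csSup_singleton]

end CBDAux

/-- For `2 ≤ t < z`, `λ_k^c(K↔_{t,z}) = t` for every `2 ≤ k ≤ t`
and `λ_k^c(K↔_{t,z}) = 0` for every `t + 1 ≤ k ≤ t + z`. -/
theorem lambdaK_completeBipartiteDigraph (t z : ℕ) (ht : 2 ≤ t) (htz : t < z) :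
    (∀ k, 2 ≤ k → k ≤ t → lambdaK (completeBipartiteDigraph t z) k = t) ∧
    (∀ k, t + 1 ≤ k → k ≤ t + z → lambdaK (completeBipartiteDigraph t z) k = 0) := by
  classical
  constructor
  · intro k hk2 hkt
    have hz1 : 0 < z := by omega
    obtain ⟨A, -, hAcard⟩ := Finset.exists_subset_card_eq
      (s := (Finset.univ : Finset (Fin t))) (n := k - 1) (by simp; omega)
    set S₀ : Finset (Fin t ⊕ Fin z) :=
      insert (Sum.inr (⟨0, hz1⟩ : Fin z)) (A.image Sum.inl) with hS₀
    have hnotmem : Sum.inr (⟨0, hz1⟩ : Fin z) ∉ A.image Sum.inl := by simp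
    have hS₀card : S₀.card = k := by
      rw [hS₀, Finset.card_insert_of_notMem hnotmem,
        Finset.card_image_of_injective _ Sum.inl_injective, hAcard]
      omega
    have hy0 : Sum.inr (⟨0, hz1⟩ : Fin z) ∈ (↑S₀ : Set (Fin t ⊕ Fin z)) := by
      simp [hS₀]
    have hS₀lam : lambdaS (completeBipartiteDigraph t z) ↑S₀ = t := by
      refine le_antisymm (CBDAux.lambdaS_le_t hy0) ?_
      refine CBDAux.t_le_lambdaS ht htz S₀ (by omega) ?_
      exact ⟨_, Finset.mem_insert_self _ _⟩
    unfold lambdaK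
    apply le_antisymm
    · exact Nat.sInf_le ⟨S₀, hS₀card, hS₀lam⟩
    · refine le_csInf ⟨t, S₀, hS₀card, hS₀lam⟩ ?_
      rintro m ⟨S, hScard, rfl⟩
      refine CBDAux.t_le_lambdaS ht htz S (by omega) ?_
      exact Finset.card_pos.mp (by omega)
  · intro k hk1 hk2
    set c := min k z with hc
    have hck : c ≤ k := min_le_left _ _
    have hcz : c ≤ z := min_le_right _ _
    have hcor : c = k ∨ c = z := by
      rcases le_total k z with h | h
      · exact Or.inl (min_eq_left h)
      · exact Or.inr (min_eq_right h)
    have hct : t + 1 ≤ c := le_min hk1 (by omega)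
    obtain ⟨T1, -, hT1⟩ := Finset.exists_subset_card_eq
      (s := (Finset.univ : Finset (Fin z))) (n := c) (by simpa using hcz)
    obtain ⟨T2, -, hT2⟩ := Finset.exists_subset_card_eq
      (s := (Finset.univ : Finset (Fin t))) (n := k - c) (by simp; omega)
    set S₁ : Finset (Fin t ⊕ Fin z) := T1.image Sum.inr ∪ T2.image Sum.inl with hS₁
    have hdisj : Disjoint (T1.image Sum.inr) (T2.image Sum.inl) := by
      simp [Finset.disjoint_left]
    have hS₁card : S₁.card = k := by
      rw [hS₁, Finset.card_union_of_disjoint hdisj,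
        Finset.card_image_of_injective _ Sum.inr_injective,
        Finset.card_image_of_injective _ Sum.inl_injective, hT1, hT2]
      omega
    have hTS : ∀ y ∈ T1, Sum.inr y ∈ (↑S₁ : Set (Fin t ⊕ Fin z)) := by
      intro y hy
      simp only [hS₁, Finset.coe_union, Set.mem_union, Finset.coe_image,
        Set.mem_image, Finset.mem_coe]
      exact Or.inl ⟨y, hy, rfl⟩
    have h0 : lambdaS (completeBipartiteDigraph t z) ↑S₁ = 0 :=
      CBDAux.lambdaS_eq_zero (by omega) hTS
    have hle : lambdaK (completeBipartiteDigraph t z) k ≤ 0 :=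
      Nat.sInf_le ⟨S₁, hS₁card, h0⟩
    omega
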